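/- Let X_1, X_2 be Bernoulli(1/2) with P(X_1 = X_2) = p, and f(X_1,X_2) = X_1. For the sample (1,1), the conditional SHAP value of feature 2 equals φ_2 = (2p−1)/4, and the dependent SHAP part of feature 2 equals its entire SHAP value: φ_{2,dep} = φ_2. -/

import Mathlib

/-- `X_1, X_2` Bernoulli(1/2) with `P(X_1 = X_2) = p` (joint pmf `q(1,1) = q(0,0) = p/2`,
`q(1,0) = q(0,1) = (1−p)/2`) and `f(X_1,X_2) = X_1`.  For the sample `(1,1)`, the
conditional SHAP value of feature 2 is `φ_2 = (2p−1)/4`, and the dependent SHAP part of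
feature 2 equals its entire SHAP value: `φ_{2,dep} = φ_2` (the interventional part
vanishing by the dummy property). -/
theorem toy_bernoulli_dependent_part (p : ℝ) (hp0 : 0 < p) (hp1 : p < 1)
    (q : Bool → Bool → ℝ)
    (h11 : q true true = p / 2) (h00 : q false false = p / 2)
    (h10 : q true false = (1 - p) / 2) (h01 : q false true = (1 - p) / 2)
    (f : Bool → Bool → ℝ) (hf : ∀ x1 x2, f x1 x2 = if x1 then 1 else 0)
    (Ef : ℝ) (hEf : Ef = ∑ x1 : Bool, ∑ x2 : Bool, q x1 x2 * f x1 x2)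
    (Ef2 : ℝ) (hEf2 : Ef2 = (∑ x1 : Bool, q x1 true * f x1 true) / (∑ x1 : Bool, q x1 true))
    (Ef1 : ℝ) (hEf1 : Ef1 = (∑ x2 : Bool, q true x2 * f true x2) / (∑ x2 : Bool, q true x2))
    (phi2 : ℝ) (hphi2 : phi2 = (1 / 2) * ((Ef2 - Ef) + (f true true - Ef1)))
    (phi2int : ℝ)
    (hphi2int : phi2int =
      (1 / 2) * (((∑ x1 : Bool, ∑ x2 : Bool, q x1 x2 * f x1 true) - Ef)
        + (((∑ x2 : Bool, q true x2 * f true true) / (∑ x2 : Bool, q true x2)) - Ef1)))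
    (phi2dep : ℝ) (hphi2dep : phi2dep = phi2 - phi2int) :
    phi2 = (2 * p - 1) / 4 ∧ phi2dep = phi2 := by
  simp only [Fintype.sum_bool, hf, h11, h00, h10, h01, if_true, if_false, Bool.false_eq_true,
    mul_one, mul_zero] at hEf hEf2 hEf1 hphi2 hphi2int
  subst hEf hEf2 hEf1 hphi2 hphi2int hphi2dep
  constructor <;> field_simp <;> ring
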